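/- arXiv:2512.00788 — 2 statements merged into one kernel-verified Lean document; each statement's English description precedes it below -/
import Mathlib

section
/- Let ι be a finite type, let h : ι → Matrix n n ℂ be a family of pairwise commuting Hermitian matrices, set H = ∑_a h a, and let A be a matrix such that Commute A (h a) for all a outside a subset T ⊆ ι, with R = ∑_{a ∈ T} ‖h a‖. Let (μ, u) and (ν, v) be eigenpairs of H with real eigenvalues μ, ν (H.mulVec u = (μ:ℂ) • u, H.mulVec v = (ν:ℂ) • v). Then for every real λ ≥ 0, |star u ⬝ᵥ (A.mulVec v)| ≤ Real.exp (-λ * ((μ - ν) - 2 * R)) * ‖A‖ * ‖u‖ * ‖v‖. -/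
open scoped Matrix.Norms.L2Operator
open scoped Matrix

private lemma exp_mulVec_eigen {n : Type*} [Fintype n] [DecidableEq n] [Nonempty n]
    (M : Matrix n n ℂ) (c : ℂ) (u : n → ℂ) (hMu : M.mulVec u = c • u) :
    (NormedSpace.exp M).mulVec u = Complex.exp c • u := by
  have hpow : ∀ k : ℕ, (M ^ k).mulVec u = c ^ k • u := by
    intro k
    induction k with
    | zero => simp
    | succ k ih =>
      rw [pow_succ', ← Matrix.mulVec_mulVec, ih, Matrix.mulVec_smul, hMu,
        smul_smul, ← pow_succ]
  let L : Matrix n n ℂ →ₗ[ℂ] (n → ℂ) :=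
    { toFun := fun M => M.mulVec u
      map_add' := fun a b => Matrix.add_mulVec a b u
      map_smul' := fun r M => Matrix.smul_mulVec r M u }
  let L' := LinearMap.toContinuousLinearMap L
  have hs : Summable (fun k : ℕ => ((Nat.factorial k : ℂ))⁻¹ • M ^ k) :=
    NormedSpace.expSeries_summable' (𝕂 := ℂ) M
  have hmap : (NormedSpace.exp M).mulVec u
      = ∑' k : ℕ, ((Nat.factorial k : ℂ))⁻¹ • (M ^ k).mulVec u := by
    rw [NormedSpace.exp_eq_tsum ℂ]
    calc L' (∑' k : ℕ, ((Nat.factorial k : ℂ))⁻¹ • M ^ k)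
        = ∑' k : ℕ, L' (((Nat.factorial k : ℂ))⁻¹ • M ^ k) := L'.map_tsum hs
      _ = ∑' k : ℕ, ((Nat.factorial k : ℂ))⁻¹ • (M ^ k).mulVec u := by
          simp [L', L, map_smul]
  rw [hmap]
  simp_rw [hpow, smul_smul]
  have hsum : Summable (fun k : ℕ => ((Nat.factorial k : ℂ))⁻¹ * c ^ k) := by
    simpa [smul_eq_mul] using NormedSpace.expSeries_summable' (𝕂 := ℂ) c
  rw [Summable.tsum_smul_const hsum]
  congr 1
  rw [Complex.exp_eq_exp_ℂ, NormedSpace.exp_eq_tsum ℂ]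
  simp [smul_eq_mul]

private lemma norm_exp_le_exp_norm' {n : Type*} [Fintype n] [DecidableEq n] [Nonempty n]
    (M : Matrix n n ℂ) : ‖NormedSpace.exp M‖ ≤ Real.exp ‖M‖ := by
  rw [NormedSpace.exp_eq_tsum ℂ]
  have hns : Summable (fun k : ℕ => ‖((Nat.factorial k : ℂ))⁻¹ • M ^ k‖) :=
    NormedSpace.norm_expSeries_summable' (𝕂 := ℂ) M
  refine (norm_tsum_le_tsum_norm hns).trans ?_
  rw [Real.exp_eq_exp_ℝ, NormedSpace.exp_eq_tsum ℝ]
  haveI : Nontrivial (Matrix n n ℂ) := by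
    refine ⟨0, 1, fun h0 => ?_⟩
    have := congr_fun (congr_fun h0 (Classical.arbitrary n)) (Classical.arbitrary n)
    simp [Matrix.one_apply] at this
  refine Summable.tsum_le_tsum (fun k => ?_) hns (NormedSpace.expSeries_summable' (𝕂 := ℝ) ‖M‖)
  rw [norm_smul, norm_inv, Complex.norm_natCast, smul_eq_mul]
  have h1 : ‖M ^ k‖ ≤ ‖M‖ ^ k := by
    cases k with
    | zero => simp [CStarRing.norm_one]
    | succ k => exact norm_pow_le' M k.succ_pos
  have h2 : (0:ℝ) ≤ (Nat.factorial k : ℝ)⁻¹ := by positivity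
  exact mul_le_mul_of_nonneg_left h1 h2

/-- For a pairwise commuting family of Hermitian matrices `h`
with sum `H`, an operator `A` commuting with all terms outside `T`
(`R = ∑_{a ∈ T} ‖h a‖`), eigenpairs `(μ, u)` and `(ν, v)` of `H`, and any
`λ ≥ 0`, the transition matrix element satisfies
`|⟨u, A v⟩| ≤ e^{-λ((μ-ν) - 2R)} ‖A‖ ‖u‖ ‖v‖` (Euclidean vector norms). -/
theorem transition_element_exponential_decay
    {n : Type*} [Fintype n] [DecidableEq n] [Nonempty n]
    {ι : Type*} [Fintype ι]
    (h : ι → Matrix n n ℂ)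
    (hherm : ∀ a, (h a).IsHermitian)
    (hcomm : ∀ a b, Commute (h a) (h b))
    (H : Matrix n n ℂ) (hH : H = ∑ a, h a)
    (A : Matrix n n ℂ) (T : Finset ι)
    (hA : ∀ a ∉ T, Commute A (h a))
    (R : ℝ) (hR : R = ∑ a ∈ T, ‖h a‖)
    (μ ν : ℝ) (u v : n → ℂ)
    (hu : H.mulVec u = (μ : ℂ) • u) (hv : H.mulVec v = (ν : ℂ) • v)
    (lam : ℝ) (hlam : 0 ≤ lam) :
    ‖star u ⬝ᵥ A.mulVec v‖
      ≤ Real.exp (-lam * ((μ - ν) - 2 * R)) * ‖A‖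
          * ‖(WithLp.equiv 2 (n → ℂ)).symm u‖
          * ‖(WithLp.equiv 2 (n → ℂ)).symm v‖ := by
  classical
  set c : ℂ := (lam : ℂ) with hc
  set HT : Matrix n n ℂ := ∑ a ∈ T, h a with hHT
  set HS : Matrix n n ℂ := ∑ a ∈ Tᶜ, h a with hHS
  have hsplit : H = HT + HS := by
    rw [hH, hHT, hHS, Finset.sum_add_sum_compl]
  have hTS : Commute HT HS :=
    Commute.sum_left _ _ _ (fun a _ =>
      Commute.sum_right _ _ _ (fun b _ => hcomm a b))
  have hAS : Commute A HS :=
    Commute.sum_right _ _ _ (fun a ha => hA a (Finset.mem_compl.mp ha))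
  -- Hermitian-ness of H
  have hHherm : H.IsHermitian := by
    rw [hH]
    unfold Matrix.IsHermitian
    rw [Matrix.conjTranspose_sum]
    exact Finset.sum_congr rfl (fun a _ => hherm a)
  -- the conjugated operator
  set X : Matrix n n ℂ := NormedSpace.exp (c • H) with hX
  set Y : Matrix n n ℂ := NormedSpace.exp (-(c • H)) with hY
  set B : Matrix n n ℂ :=
    NormedSpace.exp (c • HT) * A * NormedSpace.exp (-(c • HT)) with hB
  -- X * A * Y = B
  have hCT : Commute (c • HT) (c • HS) := (hTS.smul_left c).smul_right c
  have hXAYB : X * A * Y = B := by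
    have e1 : X = NormedSpace.exp (c • HT) * NormedSpace.exp (c • HS) := by
      rw [hX, hsplit, smul_add]
      exact Matrix.exp_add_of_commute _ _ hCT
    have e2 : Y = NormedSpace.exp (-(c • HS)) * NormedSpace.exp (-(c • HT)) := by
      rw [hY, hsplit, smul_add, neg_add, add_comm]
      exact Matrix.exp_add_of_commute _ _ (hCT.neg_left.neg_right.symm)
    have cA : Commute A (NormedSpace.exp (c • HS)) :=
      ((hAS.smul_right c).exp_right)
    have hSS : NormedSpace.exp (c • HS) * NormedSpace.exp (-(c • HS)) = 1 := by
      rw [← Matrix.exp_add_of_commute _ _ ((Commute.refl (c • HS)).neg_right),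
        add_neg_cancel, NormedSpace.exp_zero]
    rw [e1, e2, hB]
    simp only [mul_assoc]
    congr 1
    rw [← mul_assoc _ A, ← cA.eq, mul_assoc A, ← mul_assoc (NormedSpace.exp (c • HS)),
      hSS, one_mul]
  -- eigen relations for X and Y
  have hXu : X.mulVec u = Complex.exp (c * μ) • u := by
    refine exp_mulVec_eigen _ _ _ ?_
    rw [Matrix.smul_mulVec, hu, smul_smul]
  have hYv : Y.mulVec v = Complex.exp (-(c * ν)) • v := by
    refine exp_mulVec_eigen _ _ _ ?_
    rw [Matrix.neg_mulVec, Matrix.smul_mulVec, hv, smul_smul, neg_smul]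
  -- X is Hermitian
  have hXherm : Xᴴ = X := by
    rw [hX, ← Matrix.exp_conjTranspose]
    congr 1
    rw [Matrix.conjTranspose_smul, hHherm.eq]
    congr 1
    simp [hc]
  -- key scalar identity
  have hkey : star u ⬝ᵥ (X * A * Y).mulVec v
      = Complex.exp (c * μ) * Complex.exp (-(c * ν)) * (star u ⬝ᵥ A.mulVec v) := by
    rw [← Matrix.mulVec_mulVec, ← Matrix.mulVec_mulVec, hYv, Matrix.mulVec_smul,
      Matrix.mulVec_smul]
    rw [dotProduct_smul]
    rw [Matrix.dotProduct_mulVec (star u) X]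
    have : star u ᵥ* X = star (X.mulVec u) := by
      rw [Matrix.star_mulVec, hXherm]
    rw [this, hXu, star_smul, smul_dotProduct]
    have hstar : star (Complex.exp (c * μ)) = Complex.exp (c * μ) := by
      rw [Complex.star_def, ← Complex.exp_conj]
      congr 1
      simp [hc]
    rw [smul_eq_mul, smul_eq_mul, hstar]
    ring
  -- rewrite the LHS
  have habs : ‖star u ⬝ᵥ A.mulVec v‖
      = Real.exp (lam * ν - lam * μ) * ‖star u ⬝ᵥ B.mulVec v‖ := by
    have h1 : star u ⬝ᵥ A.mulVec v
        = Complex.exp (c * ν - c * μ) * (star u ⬝ᵥ B.mulVec v) := by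
      rw [← hXAYB, hkey, ← Complex.exp_add, ← mul_assoc, ← Complex.exp_add,
        show c * (ν:ℂ) - c * μ + (c * μ + -(c * ν)) = 0 by ring, Complex.exp_zero, one_mul]
    rw [h1, norm_mul, Complex.norm_exp]
    congr 2
    simp [hc]
  -- bound |⟨u, B v⟩| by ‖B‖ ‖u‖ ‖v‖
  have hCS : ‖star u ⬝ᵥ B.mulVec v‖
      ≤ ‖B‖ * ‖(WithLp.equiv 2 (n → ℂ)).symm u‖ * ‖(WithLp.equiv 2 (n → ℂ)).symm v‖ := by
    have hinner : (inner ℂ ((WithLp.equiv 2 (n → ℂ)).symm u)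
        ((WithLp.equiv 2 (n → ℂ)).symm (B.mulVec v)) : ℂ) = star u ⬝ᵥ B.mulVec v :=
      (EuclideanSpace.inner_toLp_toLp u (B.mulVec v)).trans (dotProduct_comm _ _)
    calc ‖star u ⬝ᵥ B.mulVec v‖
        = ‖(inner ℂ ((WithLp.equiv 2 (n → ℂ)).symm u)
            ((WithLp.equiv 2 (n → ℂ)).symm (B.mulVec v)) : ℂ)‖ := by
          rw [hinner]
      _ ≤ ‖(WithLp.equiv 2 (n → ℂ)).symm u‖
            * ‖(WithLp.equiv 2 (n → ℂ)).symm (B.mulVec v)‖ := norm_inner_le_norm _ _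
      _ ≤ ‖(WithLp.equiv 2 (n → ℂ)).symm u‖
            * (‖B‖ * ‖(WithLp.equiv 2 (n → ℂ)).symm v‖) := by
          gcongr
          exact Matrix.l2_opNorm_mulVec B ((WithLp.equiv 2 (n → ℂ)).symm v)
      _ = ‖B‖ * ‖(WithLp.equiv 2 (n → ℂ)).symm u‖ * ‖(WithLp.equiv 2 (n → ℂ)).symm v‖ := by
          ring
  -- bound ‖B‖
  have hHTnorm : ‖HT‖ ≤ R := by
    rw [hR, hHT]
    exact norm_sum_le _ _
  have hRnonneg : 0 ≤ R := by
    rw [hR]; positivity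
  have hnormB : ‖B‖ ≤ Real.exp (lam * R) * ‖A‖ * Real.exp (lam * R) := by
    have hsm : ‖c • HT‖ ≤ lam * R := by
      rw [norm_smul, hc, Complex.norm_real, Real.norm_eq_abs, abs_of_nonneg hlam]
      exact mul_le_mul_of_nonneg_left hHTnorm hlam
    have hsm' : ‖-(c • HT)‖ ≤ lam * R := by rwa [norm_neg]
    have b1 : ‖NormedSpace.exp (c • HT)‖ ≤ Real.exp (lam * R) :=
      (norm_exp_le_exp_norm' _).trans (Real.exp_le_exp.mpr hsm)
    have b2 : ‖NormedSpace.exp (-(c • HT))‖ ≤ Real.exp (lam * R) :=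
      (norm_exp_le_exp_norm' _).trans (Real.exp_le_exp.mpr hsm')
    calc ‖B‖ ≤ ‖NormedSpace.exp (c • HT) * A‖ * ‖NormedSpace.exp (-(c • HT))‖ :=
          norm_mul_le _ _
      _ ≤ (‖NormedSpace.exp (c • HT)‖ * ‖A‖) * ‖NormedSpace.exp (-(c • HT))‖ := by
          gcongr; exact norm_mul_le _ _
      _ ≤ (Real.exp (lam * R) * ‖A‖) * Real.exp (lam * R) :=
          mul_le_mul (mul_le_mul b1 le_rfl (norm_nonneg A) (Real.exp_pos _).le) b2
            (norm_nonneg _) (by positivity)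
  -- combine
  rw [habs]
  have hexp : Real.exp (lam * ν - lam * μ) * (Real.exp (lam * R) * ‖A‖ * Real.exp (lam * R))
      = Real.exp (-lam * ((μ - ν) - 2 * R)) * ‖A‖ := by
    rw [show Real.exp (lam * ν - lam * μ) * (Real.exp (lam * R) * ‖A‖ * Real.exp (lam * R))
        = (Real.exp (lam * ν - lam * μ) * Real.exp (lam * R) * Real.exp (lam * R)) * ‖A‖
      by ring, ← Real.exp_add, ← Real.exp_add,
      show lam * ν - lam * μ + lam * R + lam * R = -lam * ((μ - ν) - 2 * R) by ring]
  calc Real.exp (lam * ν - lam * μ) * ‖star u ⬝ᵥ B.mulVec v‖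
      ≤ Real.exp (lam * ν - lam * μ)
        * (‖B‖ * ‖(WithLp.equiv 2 (n → ℂ)).symm u‖ * ‖(WithLp.equiv 2 (n → ℂ)).symm v‖) := by
        gcongr
    _ ≤ Real.exp (lam * ν - lam * μ)
        * ((Real.exp (lam * R) * ‖A‖ * Real.exp (lam * R))
          * ‖(WithLp.equiv 2 (n → ℂ)).symm u‖ * ‖(WithLp.equiv 2 (n → ℂ)).symm v‖) := by
        gcongr
    _ = Real.exp (-lam * ((μ - ν) - 2 * R)) * ‖A‖
          * ‖(WithLp.equiv 2 (n → ℂ)).symm u‖ * ‖(WithLp.equiv 2 (n → ℂ)).symm v‖ := by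
        rw [← hexp]; ring
end

section
/- Fix N ≥ 3. Let H_B = ∑_{i=1}^N σx^{(0)} * σx^{(i)} + ∑_{i=1}^N σz^{(i)} * σz^{(i⊕1)} (MCS battery) and H_C = ∑_{i=1}^N σy^{(0)} * σx^{(i)} + ∑_{i=1}^N σz^{(i)} * σz^{(i⊕1)} (MCS charger), where i⊕1 denotes the cyclic successor on the peripheral sites {1,…,N}. Then ⁅H_B, H_C⁆ = (2 * Complex.I) • (σz^{(0)} * (∑_{i=1}^N σx^{(i)})^2) - (2 * Complex.I) • (σx^{(0)} * ∑_{i=1}^N (σy^{(i)} * σz^{(i⊕1)} + σz^{(i⊖1)} * σy^{(i)})) + (2 * Complex.I) • (σy^{(0)} * ∑_{i=1}^N (σy^{(i)} * σz^{(i⊕1)} + σz^{(i)} * σy^{(i⊕1)})), where i⊖1 is the cyclic predecessor on {1,…,N}. -/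
open scoped Matrix.Norms.L2Operator
open scoped Matrix

/-- The 2×2 matrix `P` acting on site `j` of a chain of `N+1` qubits
(identity elsewhere): `P⁽ʲ⁾ f g = P (f j) (g j) * ∏_{k ≠ j} δ_{f k, g k}`. -/
def siteOp {N : ℕ} (P : Matrix (Fin 2) (Fin 2) ℂ) (j : Fin (N + 1)) :
    Matrix (Fin (N + 1) → Fin 2) (Fin (N + 1) → Fin 2) ℂ :=
  fun f g => P (f j) (g j) * ∏ k ∈ Finset.univ.erase j, (if f k = g k then (1 : ℂ) else 0)

/-- Pauli X. -/
def σx : Matrix (Fin 2) (Fin 2) ℂ := !![0, 1; 1, 0]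
/-- Pauli Y. -/
def σy : Matrix (Fin 2) (Fin 2) ℂ := !![0, -Complex.I; Complex.I, 0]
/-- Pauli Z. -/
def σz : Matrix (Fin 2) (Fin 2) ℂ := !![1, 0; 0, -1]

/-- The peripheral site labelled `i+1` (site `0` is the central spin). -/
def per {N : ℕ} (i : Fin N) : Fin (N + 1) := i.succ

/-- The cyclic successor `i ⊕ 1` among the peripheral sites `{1, …, N}`. -/
def perS {N : ℕ} (i : Fin N) : Fin (N + 1) :=
  ⟨(i.1 + 1) % N + 1, Nat.succ_lt_succ (Nat.mod_lt _ i.pos)⟩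
/-- The cyclic predecessor `i ⊖ 1` among the peripheral sites `{1, …, N}`. -/
def perP {N : ℕ} (i : Fin N) : Fin (N + 1) :=
  ⟨(i.1 + (N - 1)) % N + 1, Nat.succ_lt_succ (Nat.mod_lt _ i.pos)⟩

/-- The modified central-spin (MCS) battery Hamiltonian
`H_B = ∑_{i=1}^N σx⁽⁰⁾ σx⁽ⁱ⁾ + ∑_{i=1}^N σz⁽ⁱ⁾ σz⁽ⁱ⊕¹⁾` on `N+1` qubits (PBC). -/
noncomputable def HB (N : ℕ) :
    Matrix (Fin (N + 1) → Fin 2) (Fin (N + 1) → Fin 2) ℂ :=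
  (∑ i : Fin N, siteOp σx 0 * siteOp σx (per i)) +
  (∑ i : Fin N, siteOp σz (per i) * siteOp σz (perS i))

/-- The modified central-spin (MCS) charger Hamiltonian
`H_C = ∑_{i=1}^N σy⁽⁰⁾ σx⁽ⁱ⁾ + ∑_{i=1}^N σz⁽ⁱ⁾ σz⁽ⁱ⊕¹⁾` on `N+1` qubits (PBC). -/
noncomputable def HC (N : ℕ) :
    Matrix (Fin (N + 1) → Fin 2) (Fin (N + 1) → Fin 2) ℂ :=
  (∑ i : Fin N, siteOp σy 0 * siteOp σx (per i)) +
  (∑ i : Fin N, siteOp σz (per i) * siteOp σz (perS i))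

/-! ### auxiliary lemmas -/

lemma siteOp_smul {N : ℕ} (c : ℂ) (P : Matrix (Fin 2) (Fin 2) ℂ) (j : Fin (N + 1)) :
    siteOp (c • P) j = c • siteOp P j := by
  ext f g
  simp [siteOp, mul_assoc]

lemma siteOp_sub {N : ℕ} (P Q : Matrix (Fin 2) (Fin 2) ℂ) (j : Fin (N + 1)) :
    siteOp (P - Q) j = siteOp P j - siteOp Q j := by
  ext f g
  simp [siteOp, sub_mul]

lemma siteOp_mul_same {N : ℕ} (P Q : Matrix (Fin 2) (Fin 2) ℂ) (j : Fin (N + 1)) :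
    siteOp P j * siteOp Q j = siteOp (P * Q) j := by
  classical
  ext f g
  rw [Matrix.mul_apply]
  have himg : ∀ h, h ∉ Finset.image (fun b => Function.update f j b) Finset.univ →
      siteOp P j f h * siteOp Q j h g = 0 := by
    intro h hh
    have hne : ¬ ∀ k, k ≠ j → f k = h k := by
      intro hall
      apply hh
      refine Finset.mem_image.2 ⟨h j, Finset.mem_univ _, ?_⟩
      funext k
      by_cases hk : k = j
      · subst hk; simp
      · rw [Function.update_of_ne hk]; exact hall k hk
    push_neg at hne
    obtain ⟨k, hkj, hk⟩ := hne
    have hz : (∏ l ∈ Finset.univ.erase j, (if f l = h l then (1:ℂ) else 0)) = 0 :=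
      Finset.prod_eq_zero (Finset.mem_erase.2 ⟨hkj, Finset.mem_univ _⟩) (by simp [hk])
    simp [siteOp, hz]
  rw [← Finset.sum_subset (Finset.subset_univ _) (fun h _ hh => himg h hh)]
  rw [Finset.sum_image (by
    intro a _ b _ hab
    have := congrFun hab j
    simpa using this)]
  simp only [siteOp, Function.update_self]
  have h1 : ∀ b : Fin 2, (∏ k ∈ Finset.univ.erase j,
      (if f k = Function.update f j b k then (1:ℂ) else 0)) = 1 := by
    intro b
    apply Finset.prod_eq_one
    intro k hk
    rw [Function.update_of_ne (Finset.mem_erase.1 hk).1]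
    simp
  have h2 : ∀ b : Fin 2, (∏ k ∈ Finset.univ.erase j,
      (if Function.update f j b k = g k then (1:ℂ) else 0)) =
      (∏ k ∈ Finset.univ.erase j, (if f k = g k then (1:ℂ) else 0)) := by
    intro b
    apply Finset.prod_congr rfl
    intro k hk
    rw [Function.update_of_ne (Finset.mem_erase.1 hk).1]
  simp only [h1, h2, mul_one]
  rw [Matrix.mul_apply, Finset.sum_mul]
  exact Finset.sum_congr rfl (by intros; ring)

lemma erase_swap' {α : Type*} [DecidableEq α] (s : Finset α) (a b : α) :
    (s.erase a).erase b = (s.erase b).erase a := by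
  ext x; simp [Finset.mem_erase]; tauto

lemma siteOp_mul_apply_ne {N : ℕ} (P Q : Matrix (Fin 2) (Fin 2) ℂ) {j k : Fin (N + 1)}
    (hjk : j ≠ k) (f g : Fin (N + 1) → Fin 2) :
    (siteOp P j * siteOp Q k) f g =
      P (f j) (g j) * Q (f k) (g k) *
        ∏ l ∈ (Finset.univ.erase j).erase k, (if f l = g l then (1:ℂ) else 0) := by
  classical
  rw [Matrix.mul_apply]
  rw [Finset.sum_eq_single (Function.update f j (g j))]
  · simp only [siteOp, Function.update_self]
    have h1 : (∏ l ∈ Finset.univ.erase j,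
        (if f l = Function.update f j (g j) l then (1:ℂ) else 0)) = 1 := by
      apply Finset.prod_eq_one
      intro l hl
      rw [Function.update_of_ne (Finset.mem_erase.1 hl).1]
      simp
    have hkj : Function.update f j (g j) k = f k := Function.update_of_ne (Ne.symm hjk) _ _
    have hjmem : j ∈ Finset.univ.erase k := Finset.mem_erase.2 ⟨hjk, Finset.mem_univ _⟩
    have h2 : (∏ l ∈ Finset.univ.erase k,
        (if Function.update f j (g j) l = g l then (1:ℂ) else 0)) =
        ∏ l ∈ (Finset.univ.erase j).erase k, (if f l = g l then (1:ℂ) else 0) := by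
      rw [← Finset.insert_erase hjmem, Finset.prod_insert (Finset.notMem_erase _ _)]
      rw [if_pos (Function.update_self j (g j) f), one_mul]
      rw [erase_swap']
      apply Finset.prod_congr rfl
      intro l hl
      rw [Function.update_of_ne (Finset.mem_erase.1 (Finset.mem_of_mem_erase hl)).1]
    rw [hkj, h1, h2]
    ring
  · intro h _ hne
    by_cases hall : ∀ l, l ≠ j → f l = h l
    · have hjg : h j ≠ g j := by
        intro hc
        apply hne
        funext l
        by_cases hl : l = j
        · subst hl; simp [hc]
        · rw [Function.update_of_ne hl]; exact (hall l hl).symm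
      have hz : (∏ l ∈ Finset.univ.erase k, (if h l = g l then (1:ℂ) else 0)) = 0 :=
        Finset.prod_eq_zero (Finset.mem_erase.2 ⟨hjk, Finset.mem_univ _⟩) (by simp [hjg])
      simp [siteOp, hz]
    · push_neg at hall
      obtain ⟨l, hlj, hl⟩ := hall
      have hz : (∏ m ∈ Finset.univ.erase j, (if f m = h m then (1:ℂ) else 0)) = 0 :=
        Finset.prod_eq_zero (Finset.mem_erase.2 ⟨hlj, Finset.mem_univ _⟩) (by simp [hl])
      simp [siteOp, hz]
  · intro hc
    exact absurd (Finset.mem_univ _) hc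

lemma siteOp_comm {N : ℕ} (P Q : Matrix (Fin 2) (Fin 2) ℂ) {j k : Fin (N + 1)}
    (hjk : j ≠ k) : siteOp P j * siteOp Q k = siteOp Q k * siteOp P j := by
  ext f g
  rw [siteOp_mul_apply_ne P Q hjk, siteOp_mul_apply_ne Q P (Ne.symm hjk), erase_swap']
  ring

lemma siteOp_commute {N : ℕ} (P Q : Matrix (Fin 2) (Fin 2) ℂ) {j k : Fin (N + 1)}
    (hjk : j ≠ k) : Commute (siteOp P j) (siteOp Q k) := siteOp_comm P Q hjk

/-! ### Pauli algebra -/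

lemma pauli_xy : σx * σy - σy * σx = (2 * Complex.I) • σz := by
  ext i j
  fin_cases i <;> fin_cases j <;>
    simp [σx, σy, σz, Matrix.mul_apply, Fin.sum_univ_two] <;> ring

lemma pauli_xz : σx * σz - σz * σx = (-(2 * Complex.I)) • σy := by
  ext i j
  fin_cases i <;> fin_cases j <;>
    simp [σx, σy, σz, Matrix.mul_apply, Fin.sum_univ_two] <;>
    ring_nf <;> simp [Complex.I_sq] <;> ring

/-! ### index lemmas -/

/-- successor index inside `Fin N`. -/
def sIdx {N : ℕ} (i : Fin N) : Fin N := ⟨(i.1 + 1) % N, Nat.mod_lt _ i.pos⟩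

lemma per_injective {N : ℕ} : Function.Injective (per (N := N)) :=
  fun _ _ h => Fin.succ_injective _ h

lemma per_ne_zero {N : ℕ} (i : Fin N) : per i ≠ 0 := Fin.succ_ne_zero i

lemma perS_ne_zero {N : ℕ} (i : Fin N) : perS i ≠ 0 := by
  simp [perS, Fin.ext_iff]

lemma per_sIdx {N : ℕ} (i : Fin N) : per (sIdx i) = perS i := rfl

lemma perP_sIdx {N : ℕ} (i : Fin N) : perP (sIdx i) = per i := by
  have hN : 0 < N := i.pos
  have h : ((i.1 + 1) % N + (N - 1)) % N = i.1 := by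
    rw [Nat.mod_add_mod]
    have : i.1 + 1 + (N - 1) = i.1 + N := by omega
    rw [this, Nat.add_mod_right, Nat.mod_eq_of_lt i.2]
  simp [perP, per, sIdx, Fin.ext_iff, h]

lemma sIdx_injective {N : ℕ} : Function.Injective (sIdx (N := N)) := by
  intro a b h
  have : perP (sIdx a) = perP (sIdx b) := by rw [h]
  rw [perP_sIdx, perP_sIdx] at this
  exact per_injective this

lemma sIdx_bijective {N : ℕ} : Function.Bijective (sIdx (N := N)) :=
  Finite.injective_iff_bijective.mp sIdx_injective

lemma per_ne_perS {N : ℕ} (hN : 2 ≤ N) (i : Fin N) : per i ≠ perS i := by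
  intro h
  have hv : i.1 + 1 = (i.1 + 1) % N + 1 := by
    simpa [per, perS, Fin.ext_iff] using h
  rcases Nat.lt_or_ge (i.1 + 1) N with hlt | hge
  · rw [Nat.mod_eq_of_lt hlt] at hv; omega
  · have hi : i.1 + 1 = N := by have := i.2; omega
    rw [hi, Nat.mod_self] at hv
    omega

lemma ne_sIdx {N : ℕ} (hN : 2 ≤ N) (i : Fin N) : i ≠ sIdx i := by
  intro h
  apply per_ne_perS hN i
  conv_lhs => rw [h]
  rw [per_sIdx]

/-! ### commutator building blocks -/

lemma lie_sum_sum {ι κ R : Type*} [Ring R] (s : Finset ι) (t : Finset κ)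
    (f : ι → R) (g : κ → R) :
    ⁅∑ i ∈ s, f i, ∑ j ∈ t, g j⁆ = ∑ i ∈ s, ∑ j ∈ t, ⁅f i, g j⁆ := by
  rw [Ring.lie_def, Finset.sum_mul_sum, Finset.sum_mul_sum,
    Finset.sum_comm (s := t) (t := s), ← Finset.sum_sub_distrib]
  exact Finset.sum_congr rfl fun i _ => (Finset.sum_sub_distrib _ _).symm

lemma sum_two {ι M : Type*} [AddCommMonoid M] [DecidableEq ι] {f : ι → M} {a b : ι}
    [Fintype ι] (hab : a ≠ b) (h : ∀ c, c ≠ a → c ≠ b → f c = 0) :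
    ∑ i, f i = f a + f b := by
  classical
  rw [← Finset.sum_subset (Finset.subset_univ ({a, b} : Finset ι))
    (fun x _ hx => by
      simp only [Finset.mem_insert, Finset.mem_singleton] at hx
      push_neg at hx
      exact h x hx.1 hx.2)]
  rw [Finset.sum_pair hab]

lemma commA {N : ℕ} (P Q R S : Matrix (Fin 2) (Fin 2) ℂ) {a b c : Fin (N + 1)}
    (hba : b ≠ a) (hca : c ≠ a)
    (hQS : siteOp Q b * siteOp S c = siteOp S c * siteOp Q b) :
    ⁅siteOp P a * siteOp Q b, siteOp R a * siteOp S c⁆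
      = siteOp (P * R - R * P) a * (siteOp Q b * siteOp S c) := by
  have h1 : Commute (siteOp Q b) (siteOp R a) := siteOp_commute _ _ hba
  have h2 : Commute (siteOp S c) (siteOp P a) := siteOp_commute _ _ hca
  rw [Ring.lie_def, h1.mul_mul_mul_comm, h2.mul_mul_mul_comm, siteOp_mul_same,
    siteOp_mul_same, ← hQS, siteOp_sub, sub_mul]

lemma commB {N : ℕ} (P Q R S : Matrix (Fin 2) (Fin 2) ℂ) {a b c : Fin (N + 1)}
    (hba : b ≠ a) (hca : c ≠ a) (hcb : c ≠ b) :
    ⁅siteOp P a * siteOp Q b, siteOp R b * siteOp S c⁆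
      = siteOp P a * (siteOp (Q * R - R * Q) b * siteOp S c) := by
  have h2 : Commute (siteOp S c) (siteOp P a) := siteOp_commute _ _ hca
  rw [Ring.lie_def, h2.mul_mul_mul_comm, siteOp_comm R P hba, siteOp_comm S Q hcb,
    mul_assoc (siteOp P a) (siteOp Q b), mul_assoc (siteOp P a) (siteOp R b),
    ← mul_assoc (siteOp Q b), ← mul_assoc (siteOp R b),
    siteOp_mul_same Q R, siteOp_mul_same R Q, siteOp_sub, sub_mul, mul_sub]

lemma commC {N : ℕ} (P Q R S : Matrix (Fin 2) (Fin 2) ℂ) {a b c : Fin (N + 1)}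
    (hba : b ≠ a) (hca : c ≠ a) (hcb : c ≠ b) :
    ⁅siteOp P a * siteOp Q b, siteOp R c * siteOp S b⁆
      = siteOp P a * (siteOp R c * siteOp (Q * S - S * Q) b) := by
  have h1 : Commute (siteOp Q b) (siteOp R c) := siteOp_commute _ _ (Ne.symm hcb)
  have h2 : Commute (siteOp S b) (siteOp P a) := siteOp_commute _ _ hba
  rw [Ring.lie_def, h1.mul_mul_mul_comm, h2.mul_mul_mul_comm, siteOp_comm R P hca,
    siteOp_mul_same Q S, siteOp_mul_same S Q, siteOp_sub,
    mul_assoc (siteOp P a) (siteOp R c), mul_assoc (siteOp P a) (siteOp R c),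
    ← mul_sub, ← mul_sub]

/-! ### the three bracket computations -/

lemma commute_xx {N : ℕ} (i j : Fin N) :
    siteOp σx (per i) * siteOp σx (per j) = siteOp σx (per j) * siteOp σx (per i) := by
  by_cases h : per i = per j
  · rw [h]
  · exact siteOp_comm _ _ h

lemma hAC {N : ℕ} :
    ⁅∑ i : Fin N, siteOp σx 0 * siteOp σx (per i),
      ∑ i : Fin N, siteOp σy 0 * siteOp σx (per i)⁆
      = (2 * Complex.I) • (siteOp σz 0 * (∑ i : Fin N, siteOp σx (per i)) ^ 2) := by
  rw [lie_sum_sum]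
  have step : ∀ i j : Fin N,
      ⁅siteOp σx 0 * siteOp σx (per i), siteOp σy 0 * siteOp σx (per j)⁆
        = (2 * Complex.I) • (siteOp σz 0 * (siteOp σx (per i) * siteOp σx (per j))) := by
    intro i j
    rw [commA σx σx σy σx (per_ne_zero i) (per_ne_zero j) (commute_xx i j), pauli_xy,
      siteOp_smul, smul_mul_assoc]
  simp only [step, ← Finset.smul_sum, ← Finset.mul_sum]
  rw [← Finset.sum_mul, sq]

lemma hPB {N : ℕ} (hN : 2 ≤ N) (P : Matrix (Fin 2) (Fin 2) ℂ) :
    ⁅∑ i : Fin N, siteOp P 0 * siteOp σx (per i),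
      ∑ i : Fin N, siteOp σz (per i) * siteOp σz (perS i)⁆
      = (-(2 * Complex.I)) •
          (siteOp P 0 * ∑ j : Fin N,
            (siteOp σy (per j) * siteOp σz (perS j) +
             siteOp σz (per j) * siteOp σy (perS j))) := by
  rw [lie_sum_sum, Finset.sum_comm]
  have step : ∀ j : Fin N,
      (∑ i : Fin N, ⁅siteOp P 0 * siteOp σx (per i),
          siteOp σz (per j) * siteOp σz (perS j)⁆)
        = (-(2 * Complex.I)) •
            (siteOp P 0 * (siteOp σy (per j) * siteOp σz (perS j) +
              siteOp σz (per j) * siteOp σy (perS j))) := by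
    intro j
    rw [sum_two (ne_sIdx hN j) ?hz]
    case hz =>
      intro c hcj hcs
      have h1 : Commute (siteOp P 0) (siteOp σz (per j)) :=
        siteOp_commute _ _ (Ne.symm (per_ne_zero j))
      have h2 : Commute (siteOp P 0) (siteOp σz (perS j)) :=
        siteOp_commute _ _ (Ne.symm (perS_ne_zero j))
      have h3 : Commute (siteOp σx (per c)) (siteOp σz (per j)) :=
        siteOp_commute _ _ (fun h => hcj (per_injective h))
      have h4 : Commute (siteOp σx (per c)) (siteOp σz (perS j)) :=
        siteOp_commute _ _ (fun h => hcs (per_injective (by rw [h, per_sIdx])))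
      have hc : Commute (siteOp P 0 * siteOp σx (per c))
          (siteOp σz (per j) * siteOp σz (perS j)) :=
        (h1.mul_right h2).mul_left (h3.mul_right h4)
      rw [Ring.lie_def, hc.eq, sub_self]
    · rw [commB P σx σz σz (per_ne_zero j) (perS_ne_zero j) (Ne.symm (per_ne_perS hN j)),
        per_sIdx,
        commC P σx σz σz (perS_ne_zero j) (per_ne_zero j) (per_ne_perS hN j),
        pauli_xz, siteOp_smul]
      simp only [siteOp_smul, smul_mul_assoc, mul_smul_comm, mul_add, smul_add]
  rw [Finset.sum_congr rfl (fun j _ => step j), ← Finset.smul_sum, ← Finset.mul_sum]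

lemma reindexZY {N : ℕ} :
    (∑ i : Fin N, siteOp σz (perP i) * siteOp σy (per i))
      = ∑ i : Fin N, siteOp σz (per i) * siteOp σy (perS i) := by
  have := Fintype.sum_bijective (sIdx (N := N)) sIdx_bijective
    (fun i => siteOp σz (per i) * siteOp σy (perS i))
    (fun i => siteOp σz (perP i) * siteOp σy (per i))
    (fun i => by
      show siteOp σz (per i) * siteOp σy (perS i)
          = siteOp σz (perP (sIdx i)) * siteOp σy (per (sIdx i))
      rw [perP_sIdx, per_sIdx])
  exact this.symm

/-- Exact form of the commutator of the MCS battery and charger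
Hamiltonians:
`⁅H_B, H_C⁆ = 2i σz⁽⁰⁾ (∑ᵢ σx⁽ⁱ⁾)² − 2i σx⁽⁰⁾ ∑ᵢ (σy⁽ⁱ⁾σz⁽ⁱ⊕¹⁾ + σz⁽ⁱ⊖¹⁾σy⁽ⁱ⁾)
  + 2i σy⁽⁰⁾ ∑ᵢ (σy⁽ⁱ⁾σz⁽ⁱ⊕¹⁾ + σz⁽ⁱ⁾σy⁽ⁱ⊕¹⁾)`. -/
theorem mcs_commutator_formula (N : ℕ) (hN : 3 ≤ N) :
    ⁅HB N, HC N⁆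
      = (2 * Complex.I) • (siteOp σz 0 * (∑ i : Fin N, siteOp σx (per i)) ^ 2)
        - (2 * Complex.I) •
            (siteOp σx 0 *
              ∑ i : Fin N,
                (siteOp σy (per i) * siteOp σz (perS i) +
                 siteOp σz (perP i) * siteOp σy (per i)))
        + (2 * Complex.I) •
            (siteOp σy 0 *
              ∑ i : Fin N,
                (siteOp σy (per i) * siteOp σz (perS i) +
                 siteOp σz (per i) * siteOp σy (perS i))) := by
  have hN2 : 2 ≤ N := by omega
  unfold HB HC
  letI : LieRing (Matrix (Fin (N + 1) → Fin 2) (Fin (N + 1) → Fin 2) ℂ) := LieRing.ofAssociativeRing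
  rw [add_lie, lie_add, lie_add, lie_self, add_zero]
  rw [hAC, hPB hN2 σx, ← lie_skew, hPB hN2 σy]
  have hU : (∑ i : Fin N,
      (siteOp σy (per i) * siteOp σz (perS i) + siteOp σz (perP i) * siteOp σy (per i)))
      = ∑ i : Fin N,
      (siteOp σy (per i) * siteOp σz (perS i) + siteOp σz (per i) * siteOp σy (perS i)) := by
    rw [Finset.sum_add_distrib, Finset.sum_add_distrib, reindexZY]
  rw [hU]
  module
end
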